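/- arXiv:2512.00551 — 7 statements merged into one kernel-verified Lean document; each statement's English description precedes it below -/
import Mathlib

section
/- Let k > m > 0 be real numbers. If a, b, c, d are nonnegative reals satisfying both a^m + b^m = c^m + d^m and a^k + b^k = c^k + d^k, then {a, b} = {c, d} as unordered pairs. -/
private lemma aux_lt (t z w x y : ℝ) (ht : 1 < t) (hw : 0 ≤ w)
    (hwy : w < y) (hyx : y ≤ x) (hxz : x < z) (hsum : x + y = z + w) :
    x ^ t + y ^ t < z ^ t + w ^ t := by
  have hzw : 0 < z - w := by linarith
  set lam := (x - w)/(z - w) with hlamdef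
  set mu := (z - x)/(z - w) with hmudef
  have hlam : 0 < lam := div_pos (by linarith) hzw
  have hmu : 0 < mu := div_pos (by linarith) hzw
  have hsum1 : lam + mu = 1 := by
    rw [hlamdef, hmudef]; field_simp; ring
  have hz0 : (0:ℝ) ≤ z := by linarith
  have hcx : x ^ t < lam * z ^ t + mu * w ^ t := by
    have h := (strictConvexOn_rpow ht).2 (Set.mem_Ici.mpr hz0) (Set.mem_Ici.mpr hw)
      (show w < z by linarith).ne' hlam hmu hsum1
    have hx' : lam * z + mu * w = x := by
      rw [hlamdef, hmudef]; field_simp; ring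
    simpa [smul_eq_mul, hx'] using h
  have hcy : y ^ t ≤ mu * z ^ t + lam * w ^ t := by
    have h := (strictConvexOn_rpow ht).convexOn.2 (Set.mem_Ici.mpr hz0)
      (Set.mem_Ici.mpr hw) hmu.le hlam.le (by linarith)
    have hy' : mu * z + lam * w = y := by
      rw [hlamdef, hmudef]; field_simp; linear_combination (w - z) * hsum
    simpa [smul_eq_mul, hy'] using h
  have hfin : (lam + mu) * (z ^ t + w ^ t) = z ^ t + w ^ t := by
    rw [hsum1, one_mul]
  nlinarith [hcx, hcy, hfin]

private lemma key1 (t x y z w : ℝ) (ht : 1 < t) (hy : 0 ≤ y) (hw : 0 ≤ w)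
    (hyx : y ≤ x) (hwz : w ≤ z) (h1 : x + y = z + w)
    (h2 : x ^ t + y ^ t = z ^ t + w ^ t) : x = z ∧ y = w := by
  rcases lt_trichotomy x z with h | h | h
  · have := aux_lt t z w x y ht hw (by linarith) hyx h h1
    linarith
  · exact ⟨h, by linarith⟩
  · have := aux_lt t x y z w ht hy (by linarith) hwz h (by linarith)
    linarith

private lemma rpow_inj' (a c m : ℝ) (ha : 0 ≤ a) (hc : 0 ≤ c) (hm : 0 < m)
    (h : a ^ m = c ^ m) : a = c := by
  rcases lt_trichotomy a c with h' | h' | h'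
  · have := Real.rpow_lt_rpow ha h' hm; linarith
  · exact h'
  · have := Real.rpow_lt_rpow hc h' hm; linarith

theorem stmt_3 (k m a b c d : ℝ) (hm : 0 < m) (hkm : m < k)
    (ha : 0 ≤ a) (hb : 0 ≤ b) (hc : 0 ≤ c) (hd : 0 ≤ d)
    (hpm : a ^ m + b ^ m = c ^ m + d ^ m)
    (hpk : a ^ k + b ^ k = c ^ k + d ^ k) :
    (a = c ∧ b = d) ∨ (a = d ∧ b = c) := by
  set t := k / m with htdef
  have ht : 1 < t := (one_lt_div hm).mpr hkm
  have hmt : m * t = k := by rw [htdef]; field_simp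
  have hpow : ∀ x : ℝ, 0 ≤ x → (x ^ m) ^ t = x ^ k := by
    intro x hx
    rw [← Real.rpow_mul hx, hmt]
  have hpk' : (a ^ m) ^ t + (b ^ m) ^ t = (c ^ m) ^ t + (d ^ m) ^ t := by
    rw [hpow a ha, hpow b hb, hpow c hc, hpow d hd]; exact hpk
  have ham : 0 ≤ a ^ m := Real.rpow_nonneg ha m
  have hbm : 0 ≤ b ^ m := Real.rpow_nonneg hb m
  have hcm : 0 ≤ c ^ m := Real.rpow_nonneg hc m
  have hdm : 0 ≤ d ^ m := Real.rpow_nonneg hd m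
  rcases le_total b a with hba | hab <;> rcases le_total d c with hdc | hcd
  · have h := key1 t (a ^ m) (b ^ m) (c ^ m) (d ^ m) ht hbm hdm
      (Real.rpow_le_rpow hb hba hm.le) (Real.rpow_le_rpow hd hdc hm.le) hpm hpk'
    exact Or.inl ⟨rpow_inj' a c m ha hc hm h.1, rpow_inj' b d m hb hd hm h.2⟩
  · have h := key1 t (a ^ m) (b ^ m) (d ^ m) (c ^ m) ht hbm hcm
      (Real.rpow_le_rpow hb hba hm.le) (Real.rpow_le_rpow hc hcd hm.le)
      (by linarith) (by linarith)
    exact Or.inr ⟨rpow_inj' a d m ha hd hm h.1, rpow_inj' b c m hb hc hm h.2⟩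
  · have h := key1 t (b ^ m) (a ^ m) (c ^ m) (d ^ m) ht ham hdm
      (Real.rpow_le_rpow ha hab hm.le) (Real.rpow_le_rpow hd hdc hm.le)
      (by linarith) (by linarith)
    exact Or.inr ⟨rpow_inj' a d m ha hd hm h.2, rpow_inj' b c m hb hc hm h.1⟩
  · have h := key1 t (b ^ m) (a ^ m) (d ^ m) (c ^ m) ht ham hcm
      (Real.rpow_le_rpow ha hab hm.le) (Real.rpow_le_rpow hc hcd hm.le)
      (by linarith) (by linarith)
    exact Or.inl ⟨rpow_inj' a c m ha hc hm h.2, rpow_inj' b d m hb hd hm h.1⟩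
end

section
/- Let k ≥ 2 be an integer and let a, b, c, d be nonnegative integers with a + b = c + d = S, S ≥ 2, and {a, b} ≠ {c, d} as unordered pairs. Then |a^k + b^k - c^k - d^k| ≥ k(k-1)·⌊S/2⌋^(k-2). -/
/-- `(x+1)^(k+1) ≤ x^(k+1) + (k+1)(x+1)^k`. -/
lemma aux_L00 (x : ℕ) : ∀ k, (x+1)^(k+1) ≤ x^(k+1) + (k+1)*(x+1)^k := by
  intro k
  induction k with
  | zero => simp
  | succ k ih =>
    have h3 : x^(k+1) ≤ (x+1)^(k+1) := Nat.pow_le_pow_left (by omega) _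
    calc (x+1)^(k+1+1) = (x+1)^(k+1)*(x+1) := by ring
      _ ≤ (x^(k+1) + (k+1)*(x+1)^k) * (x+1) := Nat.mul_le_mul_right _ ih
      _ = x^(k+1+1) + x^(k+1) + (k+1)*(x+1)^(k+1) := by ring
      _ ≤ x^(k+1+1) + (k+1+1)*(x+1)^(k+1) := by nlinarith [h3]

/-- `h^(k+1) + 2(k+1)(h+1)^k ≤ (h+2)^(k+1)`. -/
lemma aux_L0 (h : ℕ) : ∀ k, h^(k+1) + 2*(k+1)*(h+1)^k ≤ (h+2)^(k+1) := by
  intro k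
  induction k with
  | zero => simp
  | succ k ih =>
    have h00 : (h+1)^(k+1) ≤ h^(k+1) + (k+1)*(h+1)^k := aux_L00 h k
    calc h^(k+1+1) + 2*(k+1+1)*(h+1)^(k+1)
        = h^(k+1+1) + 2*(k+1)*(h+1)^(k+1) + 2*(h+1)^(k+1) := by ring
      _ ≤ h^(k+1+1) + 2*(k+1)*(h+1)^(k+1) + 2*(h^(k+1) + (k+1)*(h+1)^k) := by
          nlinarith [h00]
      _ = (h^(k+1) + 2*(k+1)*(h+1)^k) * (h+2) := by ring
      _ ≤ (h+2)^(k+1) * (h+2) := Nat.mul_le_mul_right _ ih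
      _ = (h+2)^(k+1+1) := by ring

/-- key convexity: `2(h+1)^(k+2) + (k+2)(k+1)(h+1)^k ≤ (h+2)^(k+2) + h^(k+2)`. -/
lemma aux_L1 (h : ℕ) : ∀ k, 2*(h+1)^(k+2) + (k+2)*(k+1)*(h+1)^k ≤ (h+2)^(k+2) + h^(k+2) := by
  intro k
  induction k with
  | zero =>
    have : (h+2)^(0+2) + h^(0+2) = 2*(h+1)^(0+2) + (0+2)*(0+1)*(h+1)^0 := by ring
    omega
  | succ k ih =>
    have h0 : h^(k+2) + 2*(k+2)*(h+1)^(k+1) ≤ (h+2)^(k+2) := aux_L0 h (k+1)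
    have step : (h+2)^(k+1+2) + h^(k+1+2) + h^(k+2)
        = (h+1)*((h+2)^(k+2) + h^(k+2)) + (h+2)^(k+2) := by ring
    have ihm : (h+1)*(2*(h+1)^(k+2) + (k+2)*(k+1)*(h+1)^k)
        ≤ (h+1)*((h+2)^(k+2) + h^(k+2)) := Nat.mul_le_mul_left _ ih
    have lhs : (h+1)*(2*(h+1)^(k+2) + (k+2)*(k+1)*(h+1)^k)
        = 2*(h+1)^(k+1+2) + (k+2)*(k+1)*(h+1)^(k+1) := by ring
    nlinarith [ihm, h0]

/-- monotonicity of `t ↦ (t+1)^k - t^k` for `k ≥ 2`, step form. -/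
lemma aux_gmono (j t : ℕ) : ∀ e, (t+1)^(j+2) + (t+e)^(j+2) ≤ t^(j+2) + (t+e+1)^(j+2) := by
  intro e
  induction e with
  | zero => simp only [Nat.add_zero]; omega
  | succ e ih =>
    have conv : 2*(t+e+1)^(j+2) ≤ (t+e+2)^(j+2) + (t+e)^(j+2) :=
      le_trans (Nat.le_add_right _ _) (aux_L1 (t+e) j)
    calc (t+1)^(j+2) + (t+(e+1))^(j+2)
        = (t+1)^(j+2) + (t+e+1)^(j+2) := by ring_nf
      _ ≤ t^(j+2) + (t+e+2)^(j+2) := by nlinarith [ih, conv]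
      _ = t^(j+2) + (t+(e+1)+1)^(j+2) := by ring_nf

/-- convexity transport. -/
lemma aux_key (j q v : ℕ) : ∀ e, q + e ≤ v → (q+e)^(j+2) + v^(j+2) ≤ q^(j+2) + (v+e)^(j+2) := by
  intro e
  induction e with
  | zero => intro _; simp only [Nat.add_zero]; omega
  | succ e ih =>
    intro h
    have ih' := ih (by omega)
    have gm : (q+e+1)^(j+2) + (v+e)^(j+2) ≤ (q+e)^(j+2) + (v+e+1)^(j+2) := by
      have hm := aux_gmono j (q+e) (v - q)
      have hv : q + e + (v - q) = v + e := by omega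
      rw [hv] at hm
      exact hm
    have e1 : q + (e+1) = q + e + 1 := by ring
    have e2 : v + (e+1) = v + e + 1 := by ring
    rw [e1, e2]
    nlinarith [ih', gm]

/-- one full step across the center: gap appears. -/
lemma aux_onestep (j p h v : ℕ) (hp : p ≤ h) (hv : h + 1 ≤ v) :
    (p+1)^(j+2) + v^(j+2) + (j+2)*(j+1)*(h+1)^j ≤ p^(j+2) + (v+1)^(j+2) := by
  have g1 : (p+1)^(j+2) + h^(j+2) ≤ p^(j+2) + (h+1)^(j+2) := by
    have hm := aux_gmono j p (h - p)
    have e1 : p + (h - p) = h := by omega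
    rw [e1] at hm; exact hm
  have g2 : 2*(h+1)^(j+2) + (j+2)*(j+1)*(h+1)^j ≤ (h+2)^(j+2) + h^(j+2) := aux_L1 h j
  have g3 : (h+2)^(j+2) + v^(j+2) ≤ (h+1)^(j+2) + (v+1)^(j+2) := by
    have hm := aux_gmono j (h+1) (v - (h+1))
    have e1 : h + 1 + (v - (h+1)) = v := by omega
    rw [e1] at hm
    have e3 : h + 1 + 1 = h + 2 := by omega
    rw [e3] at hm
    exact hm
  omega

/-- main natural-number inequality. -/
lemma aux_halfN (j S x y x' y' : ℕ) (hS : 2 ≤ S) (hxy : x ≤ y) (hs : x + y = S)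
    (hxy' : x' ≤ y') (hs' : x' + y' = S) (hlt : x' < x) :
    x^(j+2) + y^(j+2) + (j+2)*(j+1)*(S/2)^j ≤ x'^(j+2) + y'^(j+2) := by
  have hxh : x ≤ S/2 := by omega
  have hyh2 : S/2 ≤ y := by omega
  obtain ⟨x'', rfl⟩ : ∃ x'', x = x'' + 1 := ⟨x - 1, by omega⟩
  obtain ⟨h'', hh⟩ : ∃ h'', S/2 = h'' + 1 := ⟨S/2 - 1, by omega⟩
  have step : (x''+1)^(j+2) + y^(j+2) + (j+2)*(j+1)*(h''+1)^j
      ≤ x''^(j+2) + (y+1)^(j+2) := aux_onestep j x'' h'' y (by omega) (by omega)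
  have tail : x''^(j+2) + (y+1)^(j+2) ≤ (x')^(j+2) + y'^(j+2) := by
    have hk := aux_key j x' (y+1) (x'' - x') (by omega)
    have e1 : x' + (x'' - x') = x'' := by omega
    have e2 : y + 1 + (x'' - x') = y' := by omega
    rw [e1, e2] at hk
    exact hk
  rw [hh]
  omega

lemma aux_finalN (j S x y x' y' : ℕ) (hS : 2 ≤ S) (hxy : x ≤ y) (hs : x + y = S)
    (hxy' : x' ≤ y') (hs' : x' + y' = S) (hne : x ≠ x') :
    (((j+2)*(j+1)*(S/2)^j : ℕ) : ℤ) ≤ |(x:ℤ)^(j+2) + y^(j+2) - x'^(j+2) - y'^(j+2)| := by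
  rcases Nat.lt_or_ge x x' with h | h
  · have hN := aux_halfN j S x' y' x y hS hxy' hs' hxy hs h
    rw [le_abs]
    left
    have hZ : ((x':ℤ)^(j+2) + y'^(j+2) + ((j+2)*(j+1)*(S/2)^j : ℕ)) ≤ (x:ℤ)^(j+2) + y^(j+2) := by
      exact_mod_cast hN
    linarith
  · have hlt : x' < x := by omega
    have hN := aux_halfN j S x y x' y' hS hxy hs hxy' hs' hlt
    rw [le_abs]
    right
    have hZ : ((x:ℤ)^(j+2) + y^(j+2) + ((j+2)*(j+1)*(S/2)^j : ℕ)) ≤ (x':ℤ)^(j+2) + y'^(j+2) := by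
      exact_mod_cast hN
    linarith

theorem stmt_5 (k a b c d S : ℕ) (hk : 2 ≤ k)
    (hab : a + b = S) (hcd : c + d = S) (hS : 2 ≤ S)
    (hne : ¬((a = c ∧ b = d) ∨ (a = d ∧ b = c))) :
    (k : ℤ) * (k - 1) * (S / 2 : ℕ) ^ (k - 2) ≤
      |(a : ℤ) ^ k + (b : ℤ) ^ k - (c : ℤ) ^ k - (d : ℤ) ^ k| := by
  obtain ⟨j, rfl⟩ : ∃ j, k = j + 2 := ⟨k - 2, by omega⟩
  rw [show j + 2 - 2 = j from by omega]
  have hG : ((j+2 : ℕ) : ℤ) * (((j+2 : ℕ) : ℤ) - 1) * (((S/2 : ℕ) : ℤ))^j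
      = (((j+2)*(j+1)*(S/2)^j : ℕ) : ℤ) := by push_cast; ring
  rw [hG]
  rcases le_total a b with h1 | h1 <;> rcases le_total c d with h2 | h2
  · have hne2 : a ≠ c := by omega
    exact aux_finalN j S a b c d hS h1 hab h2 hcd hne2
  · have hne2 : a ≠ d := by omega
    have h := aux_finalN j S a b d c hS h1 hab h2 (by omega) hne2
    have heq : |(a:ℤ)^(j+2) + b^(j+2) - d^(j+2) - c^(j+2)|
        = |(a:ℤ)^(j+2) + b^(j+2) - c^(j+2) - d^(j+2)| := by ring_nf
    rwa [heq] at h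
  · have hne2 : b ≠ c := by omega
    have h := aux_finalN j S b a c d hS h1 (by omega) h2 hcd hne2
    have heq : |(b:ℤ)^(j+2) + a^(j+2) - c^(j+2) - d^(j+2)|
        = |(a:ℤ)^(j+2) + b^(j+2) - c^(j+2) - d^(j+2)| := by ring_nf
    rwa [heq] at h
  · have hne2 : b ≠ d := by omega
    have h := aux_finalN j S b a d c hS h1 (by omega) h2 (by omega) hne2
    have heq : |(b:ℤ)^(j+2) + a^(j+2) - d^(j+2) - c^(j+2)|
        = |(a:ℤ)^(j+2) + b^(j+2) - c^(j+2) - d^(j+2)| := by ring_nf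
    rwa [heq] at h
end

section
/- Let k ≥ 2 be an integer and let a, b, c, d be nonnegative integers with a + b = c + d = S, S ≥ 2, and {a, b} ≠ {c, d} as unordered pairs. Then |a^k + b^k - c^k - d^k| ≥ k(k-1)·3^(2-k)·S^(k-2). -/
-- V : x^(j+1) + (j+1)*x^j ≤ (x+1)^(j+1)
lemma lemV (j x : ℕ) : x^(j+1) + (j+1)*x^j ≤ (x+1)^(j+1) := by
  induction j with
  | zero => simp
  | succ j ih =>
    have ih' := Nat.mul_le_mul_left (x+1) ih
    have h1 : (x+1)*(x^(j+1) + (j+1)*x^j)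
        = x^(j+2) + x^(j+1) + (j+1)*x^(j+1) + (j+1)*x^j := by ring
    have h2 : (x+1)*(x+1)^(j+1) = (x+1)^(j+2) := by ring
    rw [h1, h2] at ih'
    have hz : 0 ≤ (j+1)*x^j := Nat.zero_le _
    linarith

-- U : (y+1)^(j+1) ≤ y^(j+1) + (j+1)*(y+1)^j
lemma lemU (j y : ℕ) : (y+1)^(j+1) ≤ y^(j+1) + (j+1)*(y+1)^j := by
  induction j with
  | zero => simp
  | succ j ih =>
    have ih' := Nat.mul_le_mul_left (y+1) ih
    have h1 : (y+1)*(y+1)^(j+1) = (y+1)^(j+2) := by ring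
    have h2 : (y+1)*(y^(j+1) + (j+1)*(y+1)^j)
        = y^(j+2) + y^(j+1) + (j+1)*(y+1)^(j+1) := by ring
    rw [h1, h2] at ih'
    have hle : y^(j+1) ≤ (y+1)^(j+1) := Nat.pow_le_pow_left (by omega) _
    linarith

-- R : convexity single step  2*(y+1)^j ≤ (y+2)^j + y^j
lemma lemR (j y : ℕ) : 2*(y+1)^j ≤ (y+2)^j + y^j := by
  cases j with
  | zero => simp
  | succ m =>
    have hV := lemV m (y+1)
    have hU := lemU m y
    have h1 : (y+1+1) = (y+2) := by ring
    rw [h1] at hV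
    linarith

-- Q : (y+2)^(j+1) ≥ y^(j+1) + 2*(j+1)*(y+1)^j
lemma lemQ (j y : ℕ) : y^(j+1) + 2*(j+1)*(y+1)^j ≤ (y+2)^(j+1) := by
  induction j with
  | zero => simp
  | succ j ih =>
    have ih' := Nat.mul_le_mul_left (y+2) ih
    have hU := lemU j y
    have h1 : (y+2)*(y^(j+1) + 2*(j+1)*(y+1)^j)
        = y^(j+2) + 2*y^(j+1) + 2*(j+1)*((y+1)^(j+1) + (y+1)^j) := by ring
    have h2 : (y+2)*(y+2)^(j+1) = (y+2)^(j+2) := by ring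
    rw [h1, h2] at ih'
    nlinarith [ih', hU]

-- P : second difference bound
lemma lemP (j y : ℕ) :
    2*(y+1)^(j+2) + (j+2)*(j+1)*(y+1)^j ≤ (y+2)^(j+2) + y^(j+2) := by
  induction j with
  | zero =>
    have h : (y+2)^(0+2) + y^(0+2) = 2*(y+1)^(0+2) + (0+2)*(0+1)*(y+1)^0 := by ring
    linarith
  | succ j ih =>
    have ih' := Nat.mul_le_mul_left (y+1) ih
    have l1 : (y+1)*(2*(y+1)^(j+2) + (j+2)*(j+1)*(y+1)^j)
        = 2*(y+1)^(j+3) + (j+2)*(j+1)*(y+1)^(j+1) := by ring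
    have l2 : (y+1)*((y+2)^(j+2) + y^(j+2)) + (y+2)^(j+2)
        = (y+2)^(j+3) + y^(j+3) + y^(j+2) := by ring
    rw [l1] at ih'
    have key : 2*(y+1)^(j+3) + (j+2)*(j+1)*(y+1)^(j+1) + (y+2)^(j+2)
        ≤ (y+2)^(j+3) + y^(j+3) + y^(j+2) := by
      rw [← l2]
      exact Nat.add_le_add_right ih' _
    have hQ := lemQ (j+1) y
    nlinarith [key, hQ]

-- monotonicity of g(n) = (n+1)^k - n^k
lemma gmono (k m n : ℕ) (h : m ≤ n) : (m+1)^k + n^k ≤ m^k + (n+1)^k := by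
  induction n, h using Nat.le_induction with
  | base => omega
  | succ n hn ih =>
    have hR := lemR k n
    show (m+1)^k + (n+1)^k ≤ m^k + (n+2)^k
    linarith

lemma stepSpread (k t S : ℕ) (h : 2*t < S) :
    (S-(t+1))^k + (t+1)^k ≤ (S-t)^k + t^k := by
  have h1 : S - t = (S - (t+1)) + 1 := by omega
  have h3 : t ≤ S - (t+1) := by omega
  rw [h1]
  have := gmono k t (S - (t+1)) h3
  linarith

lemma spread (k S i : ℕ) : ∀ j, i ≤ j → j + j ≤ S →
    (S-j)^k + j^k ≤ (S-i)^k + i^k := by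
  intro j hij
  induction j, hij using Nat.le_induction with
  | base => intro _; exact le_refl _
  | succ j hj ih =>
    intro hS2
    have h1 := stepSpread k j S (by omega)
    have h2 := ih (by omega)
    linarith

lemma keyNat (k a b c d S : ℕ) (hk : 2 ≤ k) (hab : a + b = S) (hcd : c + d = S)
    (hbd : b < d) (hdc : d ≤ c) :
    c^k + d^k + k*(k-1)*c^(k-2) ≤ a^k + b^k := by
  obtain ⟨j, rfl⟩ : ∃ j, k = j + 2 := ⟨k-2, by omega⟩
  obtain ⟨c', rfl⟩ : ∃ c', c = c' + 1 := ⟨c-1, by omega⟩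
  obtain ⟨e, rfl⟩ : ∃ e, d = e + 1 := ⟨d-1, by omega⟩
  have e1 : j+2-1 = j+1 := by omega
  have e2 : j+2-2 = j := by omega
  rw [e1, e2]
  have hsp := spread (j+2) S b e (by omega) (by omega)
  have hSe : S - e = c' + 2 := by omega
  have hSb : S - b = a := by omega
  rw [hSe, hSb] at hsp
  have hg := gmono (j+2) e c' (by omega)
  have hP := lemP j c'
  linarith

lemma keyReal (k a b c d S : ℕ) (hk : 2 ≤ k) (hab : a + b = S) (hcd : c + d = S)
    (hdc : d ≤ c) (hca : c < a) :
    (k : ℝ) * (k - 1) * (S : ℝ) ^ (k - 2) / 3 ^ (k - 2) ≤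
      (a : ℝ) ^ k + (b : ℝ) ^ k - (c : ℝ) ^ k - (d : ℝ) ^ k := by
  have hbd : b < d := by omega
  have hN := keyNat k a b c d S hk hab hcd hbd hdc
  have hcast : (c:ℝ)^k + (d:ℝ)^k + (k:ℝ)*((k:ℝ)-1)*(c:ℝ)^(k-2)
      ≤ (a:ℝ)^k + (b:ℝ)^k := by
    have h := (Nat.cast_le (α := ℝ)).2 hN
    push_cast at h
    rw [Nat.cast_sub (by omega : 1 ≤ k)] at h
    push_cast at h
    convert h using 2 <;> ring
  have hk1 : (1:ℝ) ≤ (k:ℝ) := by exact_mod_cast (by omega : 1 ≤ k)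
  have hk0 : (0:ℝ) ≤ (k:ℝ)*((k:ℝ)-1) := by nlinarith
  have h3c : (S:ℝ) ≤ 3*(c:ℝ) := by exact_mod_cast (by omega : S ≤ 3*c)
  have hpow : (S:ℝ)^(k-2) ≤ (3*(c:ℝ))^(k-2) :=
    pow_le_pow_left₀ (by positivity) h3c _
  have hstep : (k:ℝ)*((k:ℝ)-1)*(S:ℝ)^(k-2)/3^(k-2)
      ≤ (k:ℝ)*((k:ℝ)-1)*(c:ℝ)^(k-2) := by
    rw [div_le_iff₀ (by positivity : (0:ℝ) < 3^(k-2))]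
    calc (k:ℝ)*((k:ℝ)-1)*(S:ℝ)^(k-2)
        ≤ (k:ℝ)*((k:ℝ)-1)*(3*(c:ℝ))^(k-2) := by
          exact mul_le_mul_of_nonneg_left hpow hk0
      _ = (k:ℝ)*((k:ℝ)-1)*(c:ℝ)^(k-2)*3^(k-2) := by
          rw [mul_pow]; ring
  linarith

lemma auxAbs (k A B C D S : ℕ) (hk : 2 ≤ k) (hS : 2 ≤ S)
    (hAB : A + B = S) (hCD : C + D = S) (hBA : B ≤ A) (hDC : D ≤ C)
    (hne : A ≠ C) :
    (k : ℝ) * (k - 1) * (S : ℝ) ^ (k - 2) / 3 ^ (k - 2) ≤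
      |(A : ℝ) ^ k + (B : ℝ) ^ k - (C : ℝ) ^ k - (D : ℝ) ^ k| := by
  rcases Nat.lt_or_ge C A with h | h
  · have h1 := keyReal k A B C D S hk hAB hCD hDC h
    have h2 := le_abs_self ((A:ℝ)^k + (B:ℝ)^k - (C:ℝ)^k - (D:ℝ)^k)
    linarith
  · have hAC : A < C := by omega
    have h1 := keyReal k C D A B S hk hCD hAB hBA hAC
    have h2 := neg_le_abs ((A:ℝ)^k + (B:ℝ)^k - (C:ℝ)^k - (D:ℝ)^k)
    linarith

theorem stmt_6 (k a b c d S : ℕ) (hk : 2 ≤ k)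
    (hab : a + b = S) (hcd : c + d = S) (hS : 2 ≤ S)
    (hne : ¬((a = c ∧ b = d) ∨ (a = d ∧ b = c))) :
    (k : ℝ) * (k - 1) * (S : ℝ) ^ (k - 2) / 3 ^ (k - 2) ≤
      |(a : ℝ) ^ k + (b : ℝ) ^ k - (c : ℝ) ^ k - (d : ℝ) ^ k| := by
  rcases le_total a b with h1 | h1 <;> rcases le_total c d with h2 | h2
  · rw [show ((a:ℝ)^k + (b:ℝ)^k - (c:ℝ)^k - (d:ℝ)^k)
        = ((b:ℝ)^k + (a:ℝ)^k - (d:ℝ)^k - (c:ℝ)^k) from by ring]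
    exact auxAbs k b a d c S hk hS (by omega) (by omega) h1 h2
      (fun h => hne (Or.inl ⟨by omega, by omega⟩))
  · rw [show ((a:ℝ)^k + (b:ℝ)^k - (c:ℝ)^k - (d:ℝ)^k)
        = ((b:ℝ)^k + (a:ℝ)^k - (c:ℝ)^k - (d:ℝ)^k) from by ring]
    exact auxAbs k b a c d S hk hS (by omega) (by omega) h1 h2
      (fun h => hne (Or.inr ⟨by omega, by omega⟩))
  · rw [show ((a:ℝ)^k + (b:ℝ)^k - (c:ℝ)^k - (d:ℝ)^k)
        = ((a:ℝ)^k + (b:ℝ)^k - (d:ℝ)^k - (c:ℝ)^k) from by ring]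
    exact auxAbs k a b d c S hk hS (by omega) (by omega) h1 h2
      (fun h => hne (Or.inr ⟨by omega, by omega⟩))
  · exact auxAbs k a b c d S hk hS (by omega) (by omega) h1 h2
      (fun h => hne (Or.inl ⟨by omega, by omega⟩))
end

section
/- Let I ⊆ ℝ be an interval, φ : I → ℝ strictly convex, and S ∈ ℝ. Define F(x) = φ(x) + φ(S - x) on D = I ∩ (S - I). If x₁, x₂ ∈ D and F(x₁) = F(x₂), then {x₁, S - x₁} = {x₂, S - x₂} as unordered pairs. -/
lemma stmt_7_aux (I : Set ℝ) (φ : ℝ → ℝ) (hφ : StrictConvexOn ℝ I φ)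
    (a b c d : ℝ) (ha : a ∈ I) (hb : b ∈ I) (hc : c ∈ I) (hd : d ∈ I)
    (hsum : a + b = c + d) (hac : a < c) (hcd : c ≤ d)
    (hE : φ a + φ b = φ c + φ d) : False := by
  have hdb : d < b := by linarith
  have hab : a < b := by linarith
  have hba : (0:ℝ) < b - a := by linarith
  set t := (c - a) / (b - a) with ht
  have htba : t * (b - a) = c - a := div_mul_cancel₀ _ (ne_of_gt hba)
  have ht0 : 0 < t := div_pos (by linarith) hba
  have ht1 : t < 1 := (div_lt_one hba).2 (by linarith)
  have hc' : (1 - t) * a + t * b = c := by linear_combination htba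
  have hd' : t * a + (1 - t) * b = d := by linear_combination -htba + hsum
  have h1 := hφ.2 ha hb hab.ne (by linarith : (0:ℝ) < 1 - t) ht0 (by ring)
  have h2 := hφ.2 ha hb hab.ne ht0 (by linarith : (0:ℝ) < 1 - t) (by ring)
  simp only [smul_eq_mul] at h1 h2
  rw [hc'] at h1
  rw [hd'] at h2
  linarith

theorem stmt_7 (I : Set ℝ) (φ : ℝ → ℝ) (hφ : StrictConvexOn ℝ I φ)
    (S x₁ x₂ : ℝ)
    (h₁ : x₁ ∈ I ∩ {x : ℝ | S - x ∈ I})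
    (h₂ : x₂ ∈ I ∩ {x : ℝ | S - x ∈ I})
    (hF : φ x₁ + φ (S - x₁) = φ x₂ + φ (S - x₂)) :
    (x₁ = x₂ ∧ S - x₁ = S - x₂) ∨ (x₁ = S - x₂ ∧ S - x₁ = x₂) := by
  obtain ⟨hx₁, hSx₁⟩ := h₁
  obtain ⟨hx₂, hSx₂⟩ := h₂
  simp only [Set.mem_setOf_eq] at hSx₁ hSx₂
  suffices hs : x₁ = x₂ ∨ x₁ = S - x₂ by
    rcases hs with h | h
    · exact Or.inl ⟨h, by rw [h]⟩
    · exact Or.inr ⟨h, by rw [h]; ring⟩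
  by_contra hcon
  push_neg at hcon
  obtain ⟨hne1, hne2⟩ := hcon
  set a := min x₁ (S - x₁) with hadef
  set b := max x₁ (S - x₁) with hbdef
  set c := min x₂ (S - x₂) with hcdef
  set d := max x₂ (S - x₂) with hddef
  have hab : a + b = S := by rw [hadef, hbdef, min_add_max]; ring
  have hcd : c + d = S := by rw [hcdef, hddef, min_add_max]; ring
  have ha : a ∈ I := by rcases min_cases x₁ (S - x₁) with ⟨h, _⟩ | ⟨h, _⟩ <;> rw [hadef, h] <;> assumption
  have hb : b ∈ I := by rcases max_cases x₁ (S - x₁) with ⟨h, _⟩ | ⟨h, _⟩ <;> rw [hbdef, h] <;> assumption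
  have hc : c ∈ I := by rcases min_cases x₂ (S - x₂) with ⟨h, _⟩ | ⟨h, _⟩ <;> rw [hcdef, h] <;> assumption
  have hd : d ∈ I := by rcases max_cases x₂ (S - x₂) with ⟨h, _⟩ | ⟨h, _⟩ <;> rw [hddef, h] <;> assumption
  have hE1 : φ a + φ b = φ x₁ + φ (S - x₁) := by
    rcases le_total x₁ (S - x₁) with h | h
    · rw [hadef, hbdef, min_eq_left h, max_eq_right h]
    · rw [hadef, hbdef, min_eq_right h, max_eq_left h]; ring
  have hE2 : φ c + φ d = φ x₂ + φ (S - x₂) := by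
    rcases le_total x₂ (S - x₂) with h | h
    · rw [hcdef, hddef, min_eq_left h, max_eq_right h]
    · rw [hcdef, hddef, min_eq_right h, max_eq_left h]; ring
  have hE : φ a + φ b = φ c + φ d := by rw [hE1, hE2, hF]
  rcases lt_trichotomy a c with hlt | heq | hgt
  · exact stmt_7_aux I φ hφ a b c d ha hb hc hd (by linarith) hlt min_le_max hE
  · have hbd : b = d := by linarith
    have hx1 : x₁ = a ∨ x₁ = b := by
      rcases le_total x₁ (S - x₁) with h | h
      · left; rw [hadef, min_eq_left h]
      · right; rw [hbdef, max_eq_left h]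
    have hx2 : x₂ = c ∨ x₂ = d := by
      rcases le_total x₂ (S - x₂) with h | h
      · left; rw [hcdef, min_eq_left h]
      · right; rw [hddef, max_eq_left h]
    rcases hx1 with h1 | h1 <;> rcases hx2 with h2 | h2
    · exact hne1 (by rw [h1, h2, heq])
    · exact hne2 (by rw [h1, heq]; linarith)
    · exact hne2 (by rw [h1, hbd]; linarith)
    · exact hne1 (by rw [h1, h2, hbd])
  · exact stmt_7_aux I φ hφ c d a b hc hd ha hb (by linarith) hgt min_le_max hE.symm
end

section
/- Let k > 1 be real, S > 0, h > 0. If there exist nonnegative reals a, b, c, d with a + b = S, c + d = S + h, and a^k + b^k = c^k + d^k, then S ≥ h / (2^((k-1)/k) - 1). -/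
lemma aux_add_rpow_le (x y p : ℝ) (hx : 0 ≤ x) (hy : 0 ≤ y) (hp : 1 ≤ p) :
    x ^ p + y ^ p ≤ (x + y) ^ p := by
  lift x to NNReal using hx
  lift y to NNReal using hy
  exact_mod_cast NNReal.add_rpow_le_rpow_add x y hp

lemma aux_rpow_add_le (x y p : ℝ) (hx : 0 ≤ x) (hy : 0 ≤ y) (hp : 1 ≤ p) :
    (x + y) ^ p ≤ 2 ^ (p - 1) * (x ^ p + y ^ p) := by
  lift x to NNReal using hx
  lift y to NNReal using hy
  exact_mod_cast NNReal.rpow_add_le_mul_rpow_add_rpow x y hp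

theorem stmt_17 (k S h : ℝ) (hk : 1 < k) (hS : 0 < S) (hh : 0 < h)
    (hex : ∃ a b c d : ℝ, 0 ≤ a ∧ 0 ≤ b ∧ 0 ≤ c ∧ 0 ≤ d ∧
      a + b = S ∧ c + d = S + h ∧ a ^ k + b ^ k = c ^ k + d ^ k) :
    S ≥ h / (2 ^ ((k - 1) / k) - 1) := by
  obtain ⟨a, b, c, d, ha, hb, hc, hd, hab, hcd, heq⟩ := hex
  have hk0 : (0:ℝ) < k := lt_trans one_pos hk
  have hk1 : 1 ≤ k := hk.le
  have h1 : a ^ k + b ^ k ≤ S ^ k := hab ▸ aux_add_rpow_le a b k ha hb hk1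
  have h2 : (S + h) ^ k ≤ 2 ^ (k - 1) * (c ^ k + d ^ k) :=
    hcd ▸ aux_rpow_add_le c d k hc hd hk1
  have h3 : (S + h) ^ k ≤ 2 ^ (k - 1) * S ^ k := by
    rw [← heq] at h2
    exact h2.trans (by gcongr)
  have hSh : 0 ≤ S + h := by linarith
  have h4 : S + h ≤ 2 ^ ((k - 1) / k) * S := by
    have e1 : ((S + h) ^ k) ^ (1 / k) = S + h := by
      rw [← Real.rpow_mul hSh, mul_one_div, div_self hk0.ne', Real.rpow_one]
    have e2 : ((2:ℝ) ^ (k - 1) * S ^ k) ^ (1 / k) = 2 ^ ((k - 1) / k) * S := by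
      rw [Real.mul_rpow (by positivity) (by positivity),
        ← Real.rpow_mul (by norm_num : (0:ℝ) ≤ 2), ← Real.rpow_mul hS.le,
        mul_one_div, mul_one_div, div_self hk0.ne', Real.rpow_one]
    calc S + h = ((S + h) ^ k) ^ (1 / k) := e1.symm
      _ ≤ ((2:ℝ) ^ (k - 1) * S ^ k) ^ (1 / k) :=
          Real.rpow_le_rpow (by positivity) h3 (by positivity)
      _ = 2 ^ ((k - 1) / k) * S := e2
  have hE : 1 < (2:ℝ) ^ ((k - 1) / k) := by
    rw [Real.one_lt_rpow_iff_of_pos two_pos]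
    exact Or.inl ⟨one_lt_two, div_pos (by linarith) hk0⟩
  rw [ge_iff_le, div_le_iff₀ (by linarith)]
  nlinarith [h4]
end

section
/- Let k ≥ 2 be an integer, X > 0 a real number, and 0 ≤ δ ≤ X. Then ((X - δ)^k + (X + δ)^k)/2 ≤ (X + (k-1)·δ²/(2X))^k. -/
noncomputable def Sa (t : ℝ) (n : ℕ) : ℝ := ((1 - t) ^ n + (1 + t) ^ n) / 2
noncomputable def Da (t : ℝ) (n : ℕ) : ℝ := ((1 + t) ^ n - (1 - t) ^ n) / 2

lemma Sa_succ (t : ℝ) (n : ℕ) : Sa t (n + 1) = Sa t n + t * Da t n := by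
  simp only [Sa, Da, pow_succ]; ring

lemma Da_succ (t : ℝ) (n : ℕ) : Da t (n + 1) = Da t n + t * Sa t n := by
  simp only [Sa, Da, pow_succ]; ring

lemma Sa_nonneg {t : ℝ} (ht0 : 0 ≤ t) (ht1 : t ≤ 1) (n : ℕ) : 0 ≤ Sa t n := by
  have h1 : (0:ℝ) ≤ 1 - t := by linarith
  have h2 : (0:ℝ) ≤ 1 + t := by linarith
  have := pow_nonneg h1 n
  have := pow_nonneg h2 n
  simp only [Sa]; linarith

lemma Da_bound {t : ℝ} (ht0 : 0 ≤ t) (ht1 : t ≤ 1) (n : ℕ) :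
    0 ≤ Da t n ∧ Da t n ≤ n * t * Sa t n := by
  induction n with
  | zero => simp [Da, Sa]
  | succ n ih =>
    obtain ⟨hD0, hDle⟩ := ih
    have hS := Sa_nonneg ht0 ht1 n
    have hmono : Sa t n ≤ Sa t (n + 1) := by
      rw [Sa_succ]; nlinarith
    constructor
    · rw [Da_succ]; nlinarith
    · rw [Da_succ]
      have h1 : Da t n + t * Sa t n ≤ ((n:ℝ) + 1) * t * Sa t n := by nlinarith
      have h2 : ((n:ℝ) + 1) * t * Sa t n ≤ ((n:ℝ) + 1) * t * Sa t (n + 1) := by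
        have : (0:ℝ) ≤ ((n:ℝ) + 1) * t := by positivity
        exact mul_le_mul_of_nonneg_left hmono this
      push_cast
      linarith

lemma key_lemma {t : ℝ} (ht0 : 0 ≤ t) (ht1 : t ≤ 1) (n : ℕ) :
    Sa t n ≤ (1 + ((n:ℝ) - 1) * t ^ 2 / 2) ^ n := by
  suffices H : ∀ m : ℕ, Sa t m ≤ (1 + ((m:ℝ) - 1) * t ^ 2 / 2) ^ m ∧
      Sa t (m + 1) ≤ (1 + (((m + 1 : ℕ):ℝ) - 1) * t ^ 2 / 2) ^ (m + 1) from (H n).1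
  intro m
  induction m with
  | zero =>
    constructor
    · simp [Sa]
    · simp only [Sa]
      norm_num
  | succ m ih =>
    obtain ⟨ih1, ih2⟩ := ih
    refine ⟨ih2, ?_⟩
    set a : ℝ := 1 + (m:ℝ) * t ^ 2 / 2 with ha
    have hapos : 0 < a := by positivity
    have h2 : Sa t (m + 1) ≤ a ^ (m + 1) := by
      have : (1 + (((m + 1 : ℕ):ℝ) - 1) * t ^ 2 / 2) = a := by push_cast; ring
      rwa [this] at ih2
    obtain ⟨hD0, hDle⟩ := Da_bound ht0 ht1 (m + 1)
    have hSm1 := Sa_nonneg ht0 ht1 (m + 1)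
    set b : ℝ := 1 + ((m:ℝ) + 1) * t ^ 2 / 2 with hbdef
    have hgoal : Sa t (m + 1 + 1) ≤ b ^ (m + 2) := by
      have hb : b = a * (1 + t ^ 2 / 2 / a) := by
        rw [hbdef, ha]; field_simp; ring
      have hnn : (0:ℝ) ≤ t ^ 2 / 2 / a := by positivity
      have hber : 1 + ((m:ℝ) + 2) * (t ^ 2 / 2 / a) ≤ (1 + t ^ 2 / 2 / a) ^ (m + 2) := by
        have h := one_add_mul_le_pow (a := t ^ 2 / 2 / a) (by linarith) (m + 2)
        push_cast at h
        linarith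
      have h4 : a ^ (m + 2) + ((m:ℝ) + 2) * (t ^ 2 / 2) * a ^ (m + 1) ≤ b ^ (m + 2) := by
        rw [hb, mul_pow]
        have hmul := mul_le_mul_of_nonneg_left hber (le_of_lt (pow_pos hapos (m + 2)))
        calc a ^ (m + 2) + ((m:ℝ) + 2) * (t ^ 2 / 2) * a ^ (m + 1)
            = a ^ (m + 2) * (1 + ((m:ℝ) + 2) * (t ^ 2 / 2 / a)) := by
              rw [pow_succ a (m + 1)]
              field_simp
          _ ≤ a ^ (m + 2) * (1 + t ^ 2 / 2 / a) ^ (m + 2) := hmul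
      rw [Sa_succ]
      have h5 : t * Da t (m + 1) ≤ t * (((m:ℝ) + 1) * t * Sa t (m + 1)) := by
        have hDle' : Da t (m + 1) ≤ ((m:ℝ) + 1) * t * Sa t (m + 1) := by
          push_cast at hDle; linarith
        exact mul_le_mul_of_nonneg_left hDle' ht0
      have h6 : ((m:ℝ) + 1) * t ^ 2 * Sa t (m + 1) ≤ ((m:ℝ) + 1) * t ^ 2 * a ^ (m + 1) := by
        have hc : (0:ℝ) ≤ ((m:ℝ) + 1) * t ^ 2 := by positivity
        exact mul_le_mul_of_nonneg_left h2 hc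
      have h8 : a ^ (m + 2) = a ^ (m + 1) + (m:ℝ) * t ^ 2 / 2 * a ^ (m + 1) := by
        rw [pow_succ, ha]; ring
      nlinarith [h2, h4, h5, h6, h8]
    have hcast : (1 + (((m + 1 + 1 : ℕ):ℝ) - 1) * t ^ 2 / 2) ^ (m + 1 + 1) = b ^ (m + 2) := by
      rw [hbdef]; push_cast; ring
    rw [hcast]
    exact hgoal

theorem stmt_18 (k : ℕ) (hk : 2 ≤ k) (X δ : ℝ) (hX : 0 < X)
    (hδ0 : 0 ≤ δ) (hδX : δ ≤ X) :
    ((X - δ) ^ k + (X + δ) ^ k) / 2 ≤ (X + (k - 1) * δ ^ 2 / (2 * X)) ^ k := by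
  set t : ℝ := δ / X with htdef
  have ht0 : 0 ≤ t := by positivity
  have ht1 : t ≤ 1 := by rw [htdef, div_le_one hX]; exact hδX
  have hXne : X ≠ 0 := ne_of_gt hX
  have e1 : (X - δ) ^ k = X ^ k * (1 - t) ^ k := by
    rw [← mul_pow]; congr 1; rw [htdef]; field_simp
  have e2 : (X + δ) ^ k = X ^ k * (1 + t) ^ k := by
    rw [← mul_pow]; congr 1; rw [htdef]; field_simp
  have e3 : (X + ((k:ℝ) - 1) * δ ^ 2 / (2 * X)) ^ k
      = X ^ k * (1 + ((k:ℝ) - 1) * t ^ 2 / 2) ^ k := by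
    rw [← mul_pow]; congr 1; rw [htdef]; field_simp
  have hkey := key_lemma ht0 ht1 k
  have hXk : (0:ℝ) ≤ X ^ k := by positivity
  calc ((X - δ) ^ k + (X + δ) ^ k) / 2 = X ^ k * Sa t k := by
        rw [e1, e2]; simp only [Sa]; ring
    _ ≤ X ^ k * (1 + ((k:ℝ) - 1) * t ^ 2 / 2) ^ k := mul_le_mul_of_nonneg_left hkey hXk
    _ = (X + ((k:ℝ) - 1) * δ ^ 2 / (2 * X)) ^ k := e3.symm
end

section
/- Let k ≥ 1 and let a, b, c, d be nonnegative integers with a^k + b^k = c^k + d^k and (c + d) - (a + b) = h ≠ 0. Let M = max{a, b, c, d}. Then M ≥ 2 and k ≤ M·log 2, where log denotes the natural logarithm. -/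
lemma stmt19_aux (k m M : ℕ) (hm : 1 ≤ m) (hlt : m < M) (h : M ^ k ≤ 2 * m ^ k) :
    (k : ℝ) ≤ M * Real.log 2 := by
  have hm' : (1:ℝ) ≤ m := by exact_mod_cast hm
  have hlt' : (m:ℝ) < M := by exact_mod_cast hlt
  have hM0 : (0:ℝ) < M := by linarith
  have hm0 : (0:ℝ) < m := by linarith
  set x : ℝ := M / m with hx
  have hx1 : 1 < x := (one_lt_div hm0).2 hlt'
  have hxk : x ^ k ≤ 2 := by
    rw [hx, div_pow, div_le_iff₀ (by positivity)]
    calc (M:ℝ)^k ≤ 2 * m^k := by exact_mod_cast h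
      _ = 2 * m^k := rfl
  have hlog : (k:ℝ) * Real.log x ≤ Real.log 2 := by
    rw [← Real.log_pow]
    exact Real.log_le_log (by positivity) hxk
  have h1 : Real.log (1/x) ≤ 1/x - 1 := Real.log_le_sub_one_of_pos (by positivity)
  rw [Real.log_div one_ne_zero (by positivity), Real.log_one] at h1
  have h1x : 1/x = (m:ℝ) / M := by rw [hx, one_div_div]
  rw [h1x] at h1
  have hMm1 : (1:ℝ) ≤ (M:ℝ) - m := by
    have : m + 1 ≤ M := hlt
    have : (m:ℝ) + 1 ≤ M := by exact_mod_cast this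
    linarith
  have hdm : (m:ℝ) / M * M = m := div_mul_cancel₀ _ (ne_of_gt hM0)
  have hlow : 1 ≤ (M:ℝ) * Real.log x := by
    nlinarith [mul_le_mul_of_nonneg_left h1 (le_of_lt hM0)]
  have hk0 : (0:ℝ) ≤ k := Nat.cast_nonneg k
  nlinarith [mul_le_mul_of_nonneg_left hlog (le_of_lt hM0),
    mul_le_mul_of_nonneg_left hlow hk0]

theorem stmt_19 (k : ℕ) (hk : 1 ≤ k) (a b c d : ℕ)
    (hpow : a ^ k + b ^ k = c ^ k + d ^ k)
    (hne : ((c : ℤ) + d) - ((a : ℤ) + b) ≠ 0) :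
    2 ≤ max (max a b) (max c d) ∧
    (k : ℝ) ≤ (max (max a b) (max c d) : ℝ) * Real.log 2 := by
  simp only [← Nat.cast_max]
  have hne' : a + b ≠ c + d := by
    intro h
    apply hne
    have : ((a:ℤ) + b) = ((c:ℤ) + d) := by exact_mod_cast h
    omega
  have hmin : ∀ x y : ℕ, x ^ k + y ^ k = min x y ^ k + max x y ^ k := by
    intro x y
    rcases le_total x y with h | h
    · simp [min_eq_left h, max_eq_right h]
    · simp [min_eq_right h, max_eq_left h, Nat.add_comm]
  have hpq : max a b ≠ max c d := by
    intro hEq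
    rw [hmin a b, hmin c d, hEq] at hpow
    have hmm : min a b ^ k = min c d ^ k := by omega
    have := Nat.pow_left_injective (by omega : k ≠ 0) hmm
    have h1 := min_add_max a b
    have h2 := min_add_max c d
    omega
  have key : ∀ a b c d : ℕ, a ^ k + b ^ k = c ^ k + d ^ k → max c d < max a b →
      2 ≤ max a b ∧ (k : ℝ) ≤ ((max a b : ℕ) : ℝ) * Real.log 2 := by
    intro a b c d hpow hlt
    have hq1 : 1 ≤ max c d := by
      by_contra hq
      have hc : c = 0 := by omega
      have hd : d = 0 := by omega
      rw [hc, hd, Nat.zero_pow (by omega)] at hpow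
      have ha : a ^ k = 0 := by omega
      have hb : b ^ k = 0 := by omega
      have ha' : a = 0 := by
        rcases Nat.pow_eq_zero.1 ha with ⟨h, _⟩; exact h
      have hb' : b = 0 := by
        rcases Nat.pow_eq_zero.1 hb with ⟨h, _⟩; exact h
      rw [ha', hb', hc, hd] at hlt
      simp at hlt
    have hle : max a b ^ k ≤ 2 * max c d ^ k := by
      have h1 : max a b ^ k ≤ a ^ k + b ^ k := by
        rcases max_cases a b with ⟨h, _⟩ | ⟨h, _⟩ <;> rw [h] <;> omega
      have h2 : c ^ k ≤ max c d ^ k := Nat.pow_le_pow_left (le_max_left c d) k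
      have h3 : d ^ k ≤ max c d ^ k := Nat.pow_le_pow_left (le_max_right c d) k
      omega
    exact ⟨by omega, stmt19_aux k (max c d) (max a b) hq1 hlt hle⟩
  rcases lt_or_gt_of_ne hpq with h | h
  · rw [max_eq_right (le_of_lt h)]
    exact key c d a b hpow.symm h
  · rw [max_eq_left (le_of_lt h)]
    exact key a b c d hpow h
end
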